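/- Let f be strictly convex on (0,∞). Then for fixed positive definite B, the map A ↦ H_f(A,B) = tr(f(A) − f(B) − f'(B)(A−B)) is strictly convex on positive definite operators; consequently, if ρ = Σ_{j=1}^k λ_j P_j with k ≥ 2 distinct rank-one projections P_j, λ_j > 0, Σλ_j = 1, then for any positive definite D, H_f(ρ, D) < Σ_{j=1}^k λ_j H_f(P_j, D). -/

import Mathlib

open Matrix
open scoped ComplexOrder

/-- Standard operator function: apply `f : ℝ → ℝ` to a Hermitian matrix via its
spectral decomposition (junk value `0` for non-Hermitian input). -/
noncomputable def matFun {n : ℕ} (f : ℝ → ℝ) (A : Matrix (Fin n) (Fin n) ℂ) :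
    Matrix (Fin n) (Fin n) ℂ :=
  if hA : A.IsHermitian then
    (hA.eigenvectorUnitary : Matrix (Fin n) (Fin n) ℂ) *
      Matrix.diagonal (fun i => (f (hA.eigenvalues i) : ℂ)) *
      (star (hA.eigenvectorUnitary : Matrix (Fin n) (Fin n) ℂ))
  else 0

/-- Bregman `f`-divergence `H_f(A,B) = tr (f(A) - f(B) - f'(B)(A-B))`. -/
noncomputable def bregman {n : ℕ} (f : ℝ → ℝ) (A B : Matrix (Fin n) (Fin n) ℂ) : ℝ :=
  ((matFun f A - matFun f B - matFun (deriv f) B * (A - B)).trace).re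

/-- Jensen `f`-divergence `J_f(A,B) = tr (½(f(A)+f(B)) - f(½(A+B)))`. -/
noncomputable def jensen {n : ℕ} (f : ℝ → ℝ) (A B : Matrix (Fin n) (Fin n) ℂ) : ℝ :=
  (((1/2 : ℂ) • (matFun f A + matFun f B) - matFun f ((1/2 : ℂ) • (A + B))).trace).re

/-- `P` is a rank-one (orthogonal) projection. -/
def IsRankOneProj {n : ℕ} (P : Matrix (Fin n) (Fin n) ℂ) : Prop :=
  P.IsHermitian ∧ P * P = P ∧ P.rank = 1

section Aux
open Polynomial
variable {n : ℕ}

lemma trace_matFun {n : ℕ} (f : ℝ → ℝ) (A : Matrix (Fin n) (Fin n) ℂ) (hA : A.IsHermitian) :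
    ((matFun f A).trace).re = ∑ i, f (hA.eigenvalues i) := by
  rw [matFun, dif_pos hA, Matrix.trace_mul_cycle]
  rw [show (star (hA.eigenvectorUnitary : Matrix (Fin n) (Fin n) ℂ)) *
      (hA.eigenvectorUnitary : Matrix (Fin n) (Fin n) ℂ) *
      Matrix.diagonal (fun i => (f (hA.eigenvalues i) : ℂ)) =
      Matrix.diagonal (fun i => (f (hA.eigenvalues i) : ℂ)) by
    rw [Unitary.coe_star_mul_self, one_mul]]
  simp [Matrix.trace_diagonal]

lemma det_smul_one_sub_conj {n : ℕ} (W : Matrix (Fin n) (Fin n) ℂ)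
    (hW : W ∈ Matrix.unitaryGroup (Fin n) ℂ) (d : Fin n → ℂ) (x : ℂ) :
    det (x • (1 : Matrix (Fin n) (Fin n) ℂ) - W * diagonal d * star W) =
      ∏ i, (x - d i) := by
  have h1 : x • (1 : Matrix (Fin n) (Fin n) ℂ) - W * diagonal d * star W =
      W * (x • (1 : Matrix (Fin n) (Fin n) ℂ) - diagonal d) * star W := by
    rw [Matrix.mul_sub, Matrix.sub_mul]
    congr 1
    rw [Matrix.mul_smul, Matrix.mul_one, Matrix.smul_mul,
      (Matrix.mem_unitaryGroup_iff).mp hW]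
  rw [h1, det_mul, det_mul, mul_comm (det W), mul_assoc, ← det_mul,
    (Matrix.mem_unitaryGroup_iff).mp hW, det_one, mul_one]
  have : x • (1 : Matrix (Fin n) (Fin n) ℂ) - diagonal d =
      diagonal (fun i => x - d i) := by
    rw [Matrix.smul_one_eq_diagonal, diagonal_sub]
  rw [this, det_diagonal]

/-- Well-definedness: if `A = W diag(d) W*` then `∑ f(eig A) = ∑ f(d)`. -/
lemma sum_f_eigenvalues {n : ℕ} (f : ℝ → ℝ) {A : Matrix (Fin n) (Fin n) ℂ}
    (hA : A.IsHermitian) {W : Matrix (Fin n) (Fin n) ℂ}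
    (hW : W ∈ Matrix.unitaryGroup (Fin n) ℂ) {d : Fin n → ℝ}
    (hAW : A = W * diagonal (fun i => (d i : ℂ)) * star W) :
    ∑ i, f (hA.eigenvalues i) = ∑ i, f (d i) := by
  set μ := hA.eigenvalues with hμ
  set Pp : ℂ[X] := ∏ i, (X - C ((μ i : ℂ))) with hPp
  set Qp : ℂ[X] := ∏ i, (X - C ((d i : ℂ))) with hQp
  have dA1 : ∀ x : ℂ, det (x • (1 : Matrix (Fin n) (Fin n) ℂ) - A) = ∏ i, (x - (μ i : ℂ)) := by
    intro x
    conv_lhs => rw [hA.spectral_theorem]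
    exact det_smul_one_sub_conj _ (hA.eigenvectorUnitary).2 _ x
  have dA2 : ∀ x : ℂ, det (x • (1 : Matrix (Fin n) (Fin n) ℂ) - A) = ∏ i, (x - (d i : ℂ)) := by
    intro x
    conv_lhs => rw [hAW]
    exact det_smul_one_sub_conj _ hW _ x
  have heval : ∀ x : ℂ, Pp.eval x = Qp.eval x := by
    intro x
    rw [hPp, hQp, Polynomial.eval_prod, Polynomial.eval_prod]
    simp only [Polynomial.eval_sub, Polynomial.eval_X, Polynomial.eval_C]
    rw [← dA1 x, ← dA2 x]
  have hPQ : Pp = Qp := by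
    apply Polynomial.eq_of_infinite_eval_eq
    have : {x : ℂ | Pp.eval x = Qp.eval x} = Set.univ := by
      ext x; simp [heval x]
    rw [this]; exact Set.infinite_univ
  have hmP : Pp = ((Finset.univ.val.map fun i => ((μ i : ℂ))).map fun a => X - C a).prod := by
    rw [hPp, Multiset.map_map, Finset.prod_eq_multiset_prod]; rfl
  have hmQ : Qp = ((Finset.univ.val.map fun i => ((d i : ℂ))).map fun a => X - C a).prod := by
    rw [hQp, Multiset.map_map, Finset.prod_eq_multiset_prod]; rfl
  have hroots : (Finset.univ.val.map fun i => ((μ i : ℂ))) =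
      (Finset.univ.val.map fun i => ((d i : ℂ))) := by
    rw [← Polynomial.roots_multiset_prod_X_sub_C (Finset.univ.val.map fun i => ((μ i : ℂ))),
      ← Polynomial.roots_multiset_prod_X_sub_C (Finset.univ.val.map fun i => ((d i : ℂ))),
      ← hmP, ← hmQ, hPQ]
  have := congrArg (fun m : Multiset ℂ => (m.map (fun z => f z.re)).sum) hroots
  simpa [Multiset.map_map, Function.comp_def, Finset.sum] using this

/-- Peierls inequality plus equality analysis, for the columns of a unitary. -/
lemma peierls (f : ℝ → ℝ) (hconv : StrictConvexOn ℝ (Set.Ici 0) f)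
    {B U : Matrix (Fin n) (Fin n) ℂ} (hB : B.PosSemidef)
    (hU : U ∈ Matrix.unitaryGroup (Fin n) ℂ) :
    (∑ i, f ((star (fun a => U a i) ⬝ᵥ B *ᵥ (fun a => U a i)).re) ≤
        ∑ j, f (hB.1.eigenvalues j)) ∧
    (∑ j, f (hB.1.eigenvalues j) ≤
        ∑ i, f ((star (fun a => U a i) ⬝ᵥ B *ᵥ (fun a => U a i)).re) →
      ∀ i, B *ᵥ (fun a => U a i) =
        (((star (fun a => U a i) ⬝ᵥ B *ᵥ (fun a => U a i)).re : ℝ) : ℂ) •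
          (fun a => U a i)) := by
  classical
  set u : Fin n → Fin n → ℂ := fun i => (fun a => U a i) with hu
  set V : Matrix (Fin n) (Fin n) ℂ := (hB.1.eigenvectorUnitary : Matrix (Fin n) (Fin n) ℂ)
    with hV
  have hVmem : V ∈ Matrix.unitaryGroup (Fin n) ℂ := (hB.1.eigenvectorUnitary).2
  set β : Fin n → ℝ := hB.1.eigenvalues with hβ
  set C : Matrix (Fin n) (Fin n) ℂ := star V * U with hC
  have hCmem : C ∈ Matrix.unitaryGroup (Fin n) ℂ := mul_mem (Unitary.star_mem hVmem) hU
  set s : Fin n → Fin n → ℝ := fun i j => Complex.normSq (C j i) with hs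
  set q : Fin n → ℝ := fun i => (star (u i) ⬝ᵥ B *ᵥ u i).re with hq
  -- c i = star V *ᵥ u i has entries C j i
  have hcol : ∀ i, (star V) *ᵥ (u i) = fun j => C j i := by
    intro i; ext j
    simp [hC, Matrix.mulVec, Matrix.mul_apply, dotProduct, hu]
  have hui : ∀ i, u i = V *ᵥ (fun j => C j i) := by
    intro i
    rw [← hcol i, Matrix.mulVec_mulVec, (Matrix.mem_unitaryGroup_iff).mp hVmem, Matrix.one_mulVec]
  have hBu : ∀ i, B *ᵥ u i = V *ᵥ (fun j => (β j : ℂ) * C j i) := by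
    intro i
    conv_lhs => rw [hB.1.spectral_theorem, Unitary.conjStarAlgAut_apply]
    rw [← Matrix.mulVec_mulVec, hcol i]
    ext a
    simp only [Matrix.mulVec, dotProduct, Matrix.mul_diagonal, Function.comp_apply]
    refine Finset.sum_congr rfl fun j _ => ?_
    show V a j * (β j : ℂ) * C j i = V a j * ((β j : ℂ) * C j i)
    ring
  have hrow_sum : ∀ i, ∑ j, s i j = 1 := by
    intro i
    have h1 : (star C * C) i i = 1 := by
      rw [(Matrix.mem_unitaryGroup_iff').mp hCmem]; simp
    have h2 : (star C * C) i i = ∑ j, ((s i j : ℝ) : ℂ) := by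
      rw [Matrix.mul_apply]
      congr 1; ext j
      simp only [hs, Matrix.star_apply, ← Complex.normSq_eq_conj_mul_self, RCLike.star_def]
    rw [h2] at h1
    have := congrArg Complex.re h1
    simpa using this
  have hcol_sum : ∀ j, ∑ i, s i j = 1 := by
    intro j
    have h1 : (C * star C) j j = 1 := by
      rw [(Matrix.mem_unitaryGroup_iff).mp hCmem]; simp
    have h2 : (C * star C) j j = ∑ i, ((s i j : ℝ) : ℂ) := by
      rw [Matrix.mul_apply]
      congr 1; ext i
      simp only [hs, Matrix.star_apply, Complex.mul_conj, RCLike.star_def]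
    rw [h2] at h1
    have := congrArg Complex.re h1
    simpa using this
  have hdot : ∀ i, star (u i) ⬝ᵥ (B *ᵥ u i) =
      ∑ j, (starRingEnd ℂ) (C j i) * ((β j : ℂ) * C j i) := by
    intro i
    rw [hBu i, Matrix.dotProduct_mulVec]
    have h1 : star (u i) ᵥ* V = star (fun j => C j i) := by
      rw [← hcol i, Matrix.star_mulVec, Matrix.star_eq_conjTranspose,
        conjTranspose_conjTranspose]
    rw [h1]
    simp [dotProduct, Pi.star_apply, RCLike.star_def]
  have hq_eq : ∀ i, q i = ∑ j, s i j * β j := by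
    intro i
    have : q i = (∑ j, (starRingEnd ℂ) (C j i) * ((β j : ℂ) * C j i)).re := by
      show (star (u i) ⬝ᵥ B *ᵥ u i).re = _
      rw [hdot i]
    rw [this, Complex.re_sum]
    refine Finset.sum_congr rfl fun j _ => ?_
    rw [show (starRingEnd ℂ) (C j i) * ((β j : ℂ) * C j i)
        = (β j : ℂ) * (C j i * (starRingEnd ℂ) (C j i)) from by ring,
      Complex.mul_conj, ← Complex.ofReal_mul, Complex.ofReal_re, mul_comm]
  have hβmem : ∀ j, β j ∈ Set.Ici (0:ℝ) := fun j => hB.eigenvalues_nonneg j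
  have hjen : ∀ i, f (q i) ≤ ∑ j, s i j * f (β j) := by
    intro i
    have := hconv.convexOn.map_sum_le (t := Finset.univ) (w := s i) (p := β)
      (fun j _ => Complex.normSq_nonneg _) (hrow_sum i) (fun j _ => hβmem j)
    rw [hq_eq i]
    simpa [smul_eq_mul] using this
  have hsum2 : ∑ i, ∑ j, s i j * f (β j) = ∑ j, f (β j) := by
    rw [Finset.sum_comm]
    refine Finset.sum_congr rfl fun j _ => ?_
    rw [← Finset.sum_mul, hcol_sum j, one_mul]
  constructor
  · calc ∑ i, f (q i) ≤ ∑ i, ∑ j, s i j * f (β j) := Finset.sum_le_sum fun i _ => hjen i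
      _ = ∑ j, f (β j) := hsum2
  · intro hge i
    have htot : ∑ i, f (q i) = ∑ i, ∑ j, s i j * f (β j) :=
      le_antisymm (Finset.sum_le_sum fun i _ => hjen i) (hsum2 ▸ hge)
    have heq_i : ∀ i, f (q i) = ∑ j, s i j * f (β j) := by
      intro i
      exact (Finset.sum_eq_sum_iff_of_le (fun i _ => hjen i)).mp htot i (Finset.mem_univ i)
    set ti : Finset (Fin n) := Finset.univ.filter (fun j => s i j ≠ 0) with hti
    have hts : ∑ j ∈ ti, s i j = 1 := by
      rw [hti, Finset.sum_filter_ne_zero, hrow_sum i]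
    have htq : ∑ j ∈ ti, s i j * β j = q i := by
      rw [hti, Finset.sum_filter_of_ne (fun j _ h => by
        intro h0; exact h (by rw [h0, zero_mul])), ← hq_eq i]
    have htf : ∑ j ∈ ti, s i j * f (β j) = f (q i) := by
      rw [hti, Finset.sum_filter_of_ne (fun j _ h => by
        intro h0; exact h (by rw [h0, zero_mul])), ← heq_i i]
    have key : ∀ j ∈ ti, ∀ j' ∈ ti, β j = β j' := by
      refine hconv.eq_of_le_map_sum (fun j hj => ?_) (by simpa [smul_eq_mul] using hts)
        (fun j _ => hβmem j) ?_
      · rcases (Finset.mem_filter.mp hj) with ⟨-, hne⟩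
        exact lt_of_le_of_ne (Complex.normSq_nonneg _) (Ne.symm hne)
      · simp only [smul_eq_mul]
        rw [htf, htq]
    have hβq : ∀ j ∈ ti, β j = q i := by
      intro j hj
      have h1 : q i = ∑ j' ∈ ti, s i j' * β j := by
        rw [← htq]
        exact Finset.sum_congr rfl fun j' hj' => by rw [key j' hj' j hj]
      rw [h1, ← Finset.sum_mul, hts, one_mul]
    have hvec : (fun j => (β j : ℂ) * C j i) = (fun j => ((q i : ℝ) : ℂ) * C j i) := by
      ext j
      by_cases hC0 : C j i = 0
      · rw [hC0, mul_zero, mul_zero]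
      · have hj : j ∈ ti := by
          rw [hti, Finset.mem_filter]
          exact ⟨Finset.mem_univ j, fun h => hC0 (Complex.normSq_eq_zero.mp h)⟩
        rw [hβq j hj]
    show B *ᵥ u i = ((q i : ℝ) : ℂ) • u i
    rw [hBu i, hvec, show (fun j => ((q i : ℝ) : ℂ) * C j i)
        = ((q i : ℝ) : ℂ) • (fun j => C j i) from rfl,
      Matrix.mulVec_smul, ← hui i]

/-- Strict convexity of `A ↦ ∑ f(eig A)` on positive definite matrices. -/
lemma trace_f_strictConvex (f : ℝ → ℝ) (hconv : StrictConvexOn ℝ (Set.Ici 0) f)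
    {A₁ A₂ : Matrix (Fin n) (Fin n) ℂ} (h1 : A₁.PosDef) (h2 : A₂.PosDef)
    (hne : A₁ ≠ A₂) {t : ℝ} (ht0 : 0 < t) (ht1 : t < 1)
    (hA : ((t : ℂ) • A₁ + ((1 - t : ℝ) : ℂ) • A₂).IsHermitian) :
    ∑ i, f (hA.eigenvalues i) <
      t * ∑ i, f (h1.1.eigenvalues i) + (1 - t) * ∑ i, f (h2.1.eigenvalues i) := by
  classical
  have hUmem : (hA.eigenvectorUnitary : Matrix (Fin n) (Fin n) ℂ) ∈
      Matrix.unitaryGroup (Fin n) ℂ := (hA.eigenvectorUnitary).2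
  let U : Matrix (Fin n) (Fin n) ℂ := (hA.eigenvectorUnitary : Matrix (Fin n) (Fin n) ℂ)
  let u : Fin n → Fin n → ℂ := fun i => (fun a => U a i)
  let q1 : Fin n → ℝ := fun i => (star (u i) ⬝ᵥ A₁ *ᵥ u i).re
  let q2 : Fin n → ℝ := fun i => (star (u i) ⬝ᵥ A₂ *ᵥ u i).re
  have hucol : ∀ i, u i = ⇑(hA.eigenvectorBasis i) := by
    intro i; funext a
    exact hA.eigenvectorUnitary_apply a i
  have hμ : ∀ i, hA.eigenvalues i = t * q1 i + (1 - t) * q2 i := by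
    intro i
    have hre : hA.eigenvalues i =
        (star (u i) ⬝ᵥ ((t : ℂ) • A₁ + ((1 - t : ℝ) : ℂ) • A₂) *ᵥ u i).re := by
      rw [hA.eigenvalues_eq i, hucol i]; rfl
    rw [hre, Matrix.add_mulVec, Matrix.smul_mulVec, Matrix.smul_mulVec,
      dotProduct_add, dotProduct_smul, dotProduct_smul]
    simp only [Complex.add_re, smul_eq_mul, Complex.re_ofReal_mul]
    rfl
  have hmem1 : ∀ i, q1 i ∈ Set.Ici (0:ℝ) := fun i => h1.posSemidef.re_dotProduct_nonneg (u i)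
  have hmem2 : ∀ i, q2 i ∈ Set.Ici (0:ℝ) := fun i => h2.posSemidef.re_dotProduct_nonneg (u i)
  have hjen : ∀ i, f (hA.eigenvalues i) ≤ t * f (q1 i) + (1 - t) * f (q2 i) := by
    intro i
    rw [hμ i]
    have := hconv.convexOn.2 (hmem1 i) (hmem2 i) ht0.le (by linarith : (0:ℝ) ≤ 1 - t)
      (by ring)
    simpa [smul_eq_mul] using this
  obtain ⟨pe1, pe1eq⟩ := peierls f hconv h1.posSemidef hUmem
  obtain ⟨pe2, pe2eq⟩ := peierls f hconv h2.posSemidef hUmem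
  have pe1' : ∑ i, f (q1 i) ≤ ∑ i, f (h1.1.eigenvalues i) := pe1
  have pe2' : ∑ i, f (q2 i) ≤ ∑ i, f (h2.1.eigenvalues i) := pe2
  by_contra hcon
  push_neg at hcon
  have hchain1 : ∑ i, f (hA.eigenvalues i) ≤ ∑ i, (t * f (q1 i) + (1 - t) * f (q2 i)) :=
    Finset.sum_le_sum fun i _ => hjen i
  have hsplit : ∑ i, (t * f (q1 i) + (1 - t) * f (q2 i))
      = t * ∑ i, f (q1 i) + (1 - t) * ∑ i, f (q2 i) := by
    rw [Finset.sum_add_distrib, Finset.mul_sum, Finset.mul_sum]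
  rw [hsplit] at hchain1
  have heqtot : ∑ i, f (hA.eigenvalues i)
      = t * ∑ i, f (q1 i) + (1 - t) * ∑ i, f (q2 i) := by
    nlinarith [hcon, hchain1, pe1', pe2', ht0, ht1]
  have he1 : ∑ i, f (h1.1.eigenvalues i) ≤ ∑ i, f (q1 i) := by
    nlinarith [hcon, heqtot, pe1', pe2', ht0, ht1]
  have he2 : ∑ i, f (h2.1.eigenvalues i) ≤ ∑ i, f (q2 i) := by
    nlinarith [hcon, heqtot, pe1', pe2', ht0, ht1]
  have hv1 : ∀ i, A₁ *ᵥ u i = ((q1 i : ℝ) : ℂ) • u i := pe1eq he1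
  have hv2 : ∀ i, A₂ *ᵥ u i = ((q2 i : ℝ) : ℂ) • u i := pe2eq he2
  have hpt : ∀ i, f (hA.eigenvalues i) = t * f (q1 i) + (1 - t) * f (q2 i) := by
    intro i
    have hsum : ∑ i, f (hA.eigenvalues i) = ∑ i, (t * f (q1 i) + (1 - t) * f (q2 i)) := by
      rw [heqtot, hsplit]
    exact (Finset.sum_eq_sum_iff_of_le (fun i _ => hjen i)).mp hsum i (Finset.mem_univ i)
  have hq12 : ∀ i, q1 i = q2 i := by
    intro i
    by_contra hne12
    have := hconv.2 (hmem1 i) (hmem2 i) hne12 ht0 (by linarith : (0:ℝ) < 1 - t) (by ring)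
    simp only [smul_eq_mul] at this
    rw [← hμ i] at this
    exact absurd (hpt i) (ne_of_lt this)
  have hAv : ∀ i, A₁ *ᵥ u i = A₂ *ᵥ u i := by
    intro i
    rw [hv1 i, hv2 i, hq12 i]
  have hAU : A₁ * U = A₂ * U := by
    ext a i
    have := congrFun (hAv i) a
    simpa [Matrix.mulVec, Matrix.mul_apply, dotProduct, u, U] using this
  apply hne
  calc A₁ = A₁ * (U * star U) := by rw [(Matrix.mem_unitaryGroup_iff).mp hUmem, Matrix.mul_one]
    _ = A₂ * (U * star U) := by rw [← Matrix.mul_assoc, hAU, Matrix.mul_assoc]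
    _ = A₂ := by rw [(Matrix.mem_unitaryGroup_iff).mp hUmem, Matrix.mul_one]

lemma bregman_expand (f : ℝ → ℝ) (A B : Matrix (Fin n) (Fin n) ℂ) :
    bregman f A B = (matFun f A).trace.re - (matFun f B).trace.re -
      ((matFun (deriv f) B * A).trace.re - (matFun (deriv f) B * B).trace.re) := by
  rw [bregman, Matrix.mul_sub, trace_sub, trace_sub, trace_sub]
  simp [Complex.sub_re]

/-- Structure of rank one projections. -/
lemma rankOne_struct {P : Matrix (Fin n) (Fin n) ℂ} (hP : IsRankOneProj P) :
    ∃ v : Fin n → ℂ, star v ⬝ᵥ v = 1 ∧ P = vecMulVec v (star v) ∧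
      ∀ f : ℝ → ℝ, ∑ i, f (hP.1.eigenvalues i) = f 1 + ((n - 1 : ℕ) : ℝ) * f 0 := by
  classical
  obtain ⟨hH, hidem, hrank⟩ := hP
  set μ := hH.eigenvalues with hμ
  have h01 : ∀ i, μ i = 0 ∨ μ i = 1 := by
    intro i
    have hb := hH.mulVec_eigenvectorBasis i
    have hb2 : P *ᵥ (P *ᵥ ⇑(hH.eigenvectorBasis i)) = (μ i * μ i) • ⇑(hH.eigenvectorBasis i) := by
      rw [hb, Matrix.mulVec_smul, hb, smul_smul]
    rw [Matrix.mulVec_mulVec, hidem, hb] at hb2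
    have hsub : ((μ i * μ i - μ i) : ℝ) • ⇑(hH.eigenvectorBasis i) = 0 := by
      rw [sub_smul, ← hb2, sub_self]
    have hbne : ⇑(hH.eigenvectorBasis i) ≠ 0 := by
      intro h0
      have h1 : ‖hH.eigenvectorBasis i‖ = 1 := hH.eigenvectorBasis.orthonormal.1 i
      have : hH.eigenvectorBasis i = 0 := by
        ext a; exact congrFun h0 a
      rw [this, norm_zero] at h1; norm_num at h1
    rcases smul_eq_zero.mp hsub with h | h
    · have h2 : μ i * (μ i - 1) = 0 := by rw [mul_sub, mul_one]; exact h
      rcases mul_eq_zero.mp h2 with h' | h'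
      · exact Or.inl h'
      · exact Or.inr (by linarith [sub_eq_zero.mp h'])
    · exact absurd h hbne
  have hcard : Fintype.card {i // μ i ≠ 0} = 1 := by
    have h := hH.rank_eq_card_non_zero_eigs
    rw [hrank] at h
    exact h.symm
  obtain ⟨⟨i₀, hi₀⟩, huniq⟩ := Fintype.card_eq_one_iff.mp hcard
  have hμi₀ : μ i₀ = 1 := (h01 i₀).resolve_left hi₀
  have hzero : ∀ i, i ≠ i₀ → μ i = 0 := by
    intro i hne
    by_contra h0
    exact hne (congrArg Subtype.val (huniq ⟨i, h0⟩))
  set v : Fin n → ℂ := fun a => (hH.eigenvectorBasis i₀) a with hv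
  have hUv : ∀ a, (hH.eigenvectorUnitary : Matrix (Fin n) (Fin n) ℂ) a i₀ = v a :=
    fun a => hH.eigenvectorUnitary_apply a i₀
  refine ⟨v, ?_, ?_, ?_⟩
  · have h1 : (star (hH.eigenvectorUnitary : Matrix (Fin n) (Fin n) ℂ) *
        (hH.eigenvectorUnitary : Matrix (Fin n) (Fin n) ℂ)) i₀ i₀ = 1 := by
      rw [(Matrix.mem_unitaryGroup_iff').mp (hH.eigenvectorUnitary).2]; simp
    rw [← h1, Matrix.mul_apply, dotProduct]
    refine Finset.sum_congr rfl fun a _ => ?_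
    simp [Matrix.star_apply, Matrix.conjTranspose_apply, hUv a, Pi.star_apply, hv]
  · ext a c
    conv_lhs => rw [hH.spectral_theorem, Unitary.conjStarAlgAut_apply]
    rw [Matrix.mul_apply, vecMulVec_apply]
    rw [Finset.sum_eq_single i₀]
    · rw [Matrix.mul_diagonal]
      have hsU : (star (hH.eigenvectorUnitary : Matrix (Fin n) (Fin n) ℂ)) i₀ c
          = (starRingEnd ℂ) (v c) := by
        rw [Matrix.star_eq_conjTranspose, Matrix.conjTranspose_apply, hUv c]; rfl
      rw [hsU, hUv a]
      show v a * ((Complex.ofReal ∘ μ) i₀) * (starRingEnd ℂ) (v c) = v a * (star v) c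
      rw [Function.comp_apply, hμi₀]
      simp [RCLike.star_def]
    · intro j _ hj
      rw [Matrix.mul_diagonal]
      show (hH.eigenvectorUnitary : Matrix (Fin n) (Fin n) ℂ) a j * ((Complex.ofReal ∘ μ) j)
          * (star (hH.eigenvectorUnitary : Matrix (Fin n) (Fin n) ℂ)) j c = 0
      rw [Function.comp_apply, hzero j hj]
      simp
    · intro h; exact absurd (Finset.mem_univ i₀) h
  · intro f
    have hif : ∀ i, f (μ i) = if i = i₀ then f 1 else f 0 := by
      intro i
      by_cases h : i = i₀
      · rw [h, hμi₀, if_pos rfl]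
      · rw [hzero i h, if_neg h]
    have key : ∑ i, f (μ i) = f 1 + ((n - 1 : ℕ) : ℝ) * f 0 := by
      simp_rw [hif]
      rw [Finset.sum_ite]
      rw [Finset.filter_eq' Finset.univ i₀, if_pos (Finset.mem_univ i₀)]
      have hfil : Finset.univ.filter (fun x : Fin n => ¬ x = i₀) = Finset.univ.erase i₀ := by
        ext x; simp [Finset.mem_erase, and_comm]
      rw [hfil, Finset.sum_const, Finset.sum_const, Finset.card_singleton,
        Finset.card_erase_of_mem (Finset.mem_univ i₀), Finset.card_univ, Fintype.card_fin]
      simp [nsmul_eq_mul]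
    exact key

lemma dot_eq_zero_of_proj_orth {v w : Fin n → ℂ} (hv : star v ⬝ᵥ v = 1)
    (hw : star w ⬝ᵥ w = 1)
    (h : vecMulVec v (star v) * vecMulVec w (star w) = 0) : star v ⬝ᵥ w = 0 := by
  by_contra hd
  have hvne : ∃ a, v a ≠ 0 := by
    by_contra h0
    push_neg at h0
    have : v = 0 := funext h0
    rw [this] at hv
    simp [dotProduct] at hv
  have hwne : ∃ c, w c ≠ 0 := by
    by_contra h0
    push_neg at h0
    have : w = 0 := funext h0
    rw [this] at hw
    simp [dotProduct] at hw
  obtain ⟨a, ha⟩ := hvne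
  obtain ⟨c, hc⟩ := hwne
  have hentry : (vecMulVec v (star v) * vecMulVec w (star w)) a c = 0 := by rw [h]; rfl
  rw [Matrix.mul_apply] at hentry
  have hform : ∑ b, vecMulVec v (star v) a b * vecMulVec w (star w) b c
      = v a * (star v ⬝ᵥ w) * (star w) c := by
    rw [dotProduct, Finset.mul_sum, Finset.sum_mul]
    refine Finset.sum_congr rfl fun b _ => ?_
    simp only [vecMulVec_apply, Pi.star_apply]
    ring
  rw [hform] at hentry
  rcases mul_eq_zero.mp hentry with h1 | h1
  · rcases mul_eq_zero.mp h1 with h2 | h2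
    · exact ha h2
    · exact hd h2
  · exact hc (by simpa using h1)

/-- Extension of an orthonormal family of vectors to the columns of a unitary matrix. -/
lemma exists_unitary_extend {k : ℕ} (v : Fin k → Fin n → ℂ)
    (horth : ∀ i j, star (v i) ⬝ᵥ v j = if i = j then 1 else 0) :
    ∃ (hkn : k ≤ n) (W : Matrix (Fin n) (Fin n) ℂ),
      W ∈ Matrix.unitaryGroup (Fin n) ℂ ∧
      ∀ (j : Fin k) (a : Fin n), W a (Fin.castLE hkn j) = v j a := by
  classical
  set e : Fin k → EuclideanSpace ℂ (Fin n) := fun j => (WithLp.equiv 2 _).symm (v j) with he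
  have horth' : Orthonormal ℂ e := by
    rw [orthonormal_iff_ite]
    intro i j
    rw [he]
    change v j ⬝ᵥ star (v i) = _
    rw [dotProduct_comm]
    exact horth i j
  have hkn : k ≤ n := by
    have h1 := horth'.linearIndependent.fintype_card_le_finrank
    simpa [finrank_euclideanSpace_fin] using h1
  set vext : Fin n → EuclideanSpace ℂ (Fin n) :=
    fun i => if h : (i : ℕ) < k then e ⟨i, h⟩ else 0 with hvext
  set s : Set (Fin n) := {i | (i : ℕ) < k} with hs
  have hrest : Orthonormal ℂ (s.restrict vext) := by
    rw [orthonormal_iff_ite]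
    rintro ⟨i, hi⟩ ⟨j, hj⟩
    have hi' : (i : ℕ) < k := hi
    have hj' : (j : ℕ) < k := hj
    change inner ℂ (vext i) (vext j) = _
    simp only [Set.restrict_apply, hvext, dif_pos hi', dif_pos hj']
    have := (orthonormal_iff_ite.mp horth') ⟨i, hi'⟩ ⟨j, hj'⟩
    rw [this]
    congr 1
    simp only [eq_iff_iff]
    constructor
    · intro h; exact Subtype.ext (by simpa [Fin.ext_iff] using congrArg Fin.val h)
    · intro h
      have : (i : ℕ) = (j : ℕ) := by simpa [Fin.ext_iff] using congrArg Subtype.val h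
      exact Fin.ext this
  obtain ⟨b, hb⟩ := hrest.exists_orthonormalBasis_extension_of_card_eq
    (by simp [finrank_euclideanSpace_fin])
  refine ⟨hkn, Matrix.of (fun a i => b i a), ?_, ?_⟩
  · rw [Matrix.mem_unitaryGroup_iff']
    ext i j
    rw [Matrix.mul_apply, Matrix.one_apply]
    have := (orthonormal_iff_ite.mp b.orthonormal) i j
    rw [← this, EuclideanSpace.inner_eq_star_dotProduct, dotProduct_comm]
    rw [dotProduct]
    refine Finset.sum_congr rfl fun a _ => ?_
    simp [Matrix.star_apply, Matrix.conjTranspose_apply, Matrix.of_apply]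
  · intro j a
    have hmem : (Fin.castLE hkn j) ∈ s := j.2
    have := hb (Fin.castLE hkn j) hmem
    rw [Matrix.of_apply, this]
    simp only [hvext]
    rw [dif_pos (show ((Fin.castLE hkn j : Fin n) : ℕ) < k from j.2)]
    have : (⟨((Fin.castLE hkn j : Fin n) : ℕ), j.2⟩ : Fin k) = j := by
      apply Fin.ext; rfl
    rw [this, he]
    rfl

end Aux

/-- strict convexity of `A ↦ H_f(A,B)` and the resulting strict
Jensen inequality for a mixed state `ρ = Σ λ_j P_j`. -/
theorem bregman_strictConvex_fst {n : ℕ} (f : ℝ → ℝ)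
    (hconv : StrictConvexOn ℝ (Set.Ici 0) f)
    (hdiff : ∀ x ∈ Set.Ioi (0 : ℝ), DifferentiableAt ℝ f x) :
    (∀ (B : Matrix (Fin n) (Fin n) ℂ), B.PosDef →
      ∀ (A₁ A₂ : Matrix (Fin n) (Fin n) ℂ), A₁.PosDef → A₂.PosDef → A₁ ≠ A₂ →
      ∀ t : ℝ, 0 < t → t < 1 →
        bregman f ((t : ℂ) • A₁ + ((1 - t : ℝ) : ℂ) • A₂) B <
          t * bregman f A₁ B + (1 - t) * bregman f A₂ B) ∧
    (∀ (k : ℕ), 2 ≤ k → ∀ (P : Fin k → Matrix (Fin n) (Fin n) ℂ),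
      (∀ j, IsRankOneProj (P j)) → (∀ i j, i ≠ j → P i * P j = 0) →
      ∀ (w : Fin k → ℝ), (∀ j, 0 < w j) → (∑ j, w j = 1) →
      ∀ (D : Matrix (Fin n) (Fin n) ℂ), D.PosDef →
        bregman f (∑ j, ((w j : ℂ)) • P j) D < ∑ j, w j * bregman f (P j) D) := by
  constructor
  · -- part 1: strict convexity
    intro B hB A₁ A₂ h1 h2 hne t ht0 ht1
    have hA : ((t : ℂ) • A₁ + ((1 - t : ℝ) : ℂ) • A₂).IsHermitian := by
      show _ᴴ = _
      rw [conjTranspose_add, conjTranspose_smul, conjTranspose_smul, h1.1.eq, h2.1.eq]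
      simp [Complex.star_def, Complex.conj_ofReal]
    rw [bregman_expand f ((t : ℂ) • A₁ + ((1 - t : ℝ) : ℂ) • A₂) B,
      bregman_expand f A₁ B, bregman_expand f A₂ B,
      trace_matFun f ((t : ℂ) • A₁ + ((1 - t : ℝ) : ℂ) • A₂) hA,
      trace_matFun f A₁ h1.1, trace_matFun f A₂ h2.1]
    have hlin : (matFun (deriv f) B * ((t : ℂ) • A₁ + ((1 - t : ℝ) : ℂ) • A₂)).trace.re
        = t * (matFun (deriv f) B * A₁).trace.re
          + (1 - t) * (matFun (deriv f) B * A₂).trace.re := by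
      rw [Matrix.mul_add, Matrix.mul_smul, Matrix.mul_smul, trace_add, trace_smul,
        trace_smul]
      simp [Complex.add_re, smul_eq_mul, Complex.re_ofReal_mul]
    rw [hlin]
    have key := trace_f_strictConvex f hconv h1 h2 hne ht0 ht1 hA
    nlinarith [key]
  · -- part 2
    intro k hk P hP horth w hw hsw D hD
    choose v hunit hproj hsum using fun j => rankOne_struct (hP j)
    have horthv : ∀ i j, star (v i) ⬝ᵥ v j = if i = j then 1 else 0 := by
      intro i j
      by_cases h : i = j
      · rw [h, if_pos rfl]; exact hunit j
      · rw [if_neg h]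
        apply dot_eq_zero_of_proj_orth (hunit i) (hunit j)
        rw [← hproj i, ← hproj j]
        exact horth i j h
    obtain ⟨hkn, W, hWmem, hWcol⟩ := exists_unitary_extend v horthv
    set dR : Fin n → ℝ := fun i => if h : (i : ℕ) < k then w ⟨i, h⟩ else 0 with hdR
    have hdRcast : ∀ j : Fin k, dR (Fin.castLE hkn j) = w j := by
      intro j
      simp only [hdR, Fin.coe_castLE]
      rw [dif_pos j.2]
    have hdecomp : (∑ j, ((w j : ℂ)) • P j)
        = W * diagonal (fun i => ((dR i : ℝ) : ℂ)) * star W := by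
      ext a c
      have hRHS : (W * diagonal (fun i => ((dR i : ℝ) : ℂ)) * star W) a c
          = ∑ i, W a i * ((dR i : ℝ) : ℂ) * (starRingEnd ℂ) (W c i) := by
        rw [Matrix.mul_apply]
        refine Finset.sum_congr rfl fun i _ => ?_
        rw [Matrix.mul_diagonal, Matrix.star_eq_conjTranspose, Matrix.conjTranspose_apply]
        rfl
      have hLHS : (∑ j, ((w j : ℂ)) • P j) a c
          = ∑ j, (w j : ℂ) * (v j a * (starRingEnd ℂ) (v j c)) := by
        rw [Matrix.sum_apply]
        refine Finset.sum_congr rfl fun j _ => ?_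
        rw [Matrix.smul_apply, hproj j, vecMulVec_apply]
        simp [RCLike.star_def, smul_eq_mul]
      rw [hRHS, hLHS]
      have hz : ∀ i ∈ Finset.univ, i ∉ Finset.univ.map (Fin.castLEEmb hkn) →
          W a i * ((dR i : ℝ) : ℂ) * (starRingEnd ℂ) (W c i) = 0 := by
        intro i _ hni
        have hik : ¬ ((i : ℕ) < k) := by
          intro hik
          exact hni (Finset.mem_map.mpr ⟨⟨i, hik⟩, Finset.mem_univ _, by
            apply Fin.ext; rfl⟩)
        have : dR i = 0 := by rw [hdR]; simp only [dif_neg hik]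
        rw [this]
        simp
      rw [← Finset.sum_subset (Finset.subset_univ (Finset.univ.map (Fin.castLEEmb hkn))) hz,
        Finset.sum_map]
      refine Finset.sum_congr rfl fun j _ => ?_
      rw [show ((Fin.castLEEmb hkn) j) = Fin.castLE hkn j from rfl,
        hWcol j a, hWcol j c, hdRcast j]
      ring
    have hρ : (∑ j, ((w j : ℂ)) • P j).IsHermitian := by
      rw [hdecomp]
      show _ᴴ = _
      rw [conjTranspose_mul, conjTranspose_mul, diagonal_conjTranspose]
      have hst : (star fun i => ((dR i : ℝ) : ℂ)) = fun i => ((dR i : ℝ) : ℂ) :=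
        funext fun i => Complex.conj_ofReal _
      rw [hst, Matrix.star_eq_conjTranspose, conjTranspose_conjTranspose, Matrix.mul_assoc]
    -- trace values
    have hSρ : (matFun f (∑ j, ((w j : ℂ)) • P j)).trace.re = ∑ i, f (dR i) := by
      rw [trace_matFun f _ hρ]
      exact sum_f_eigenvalues f hρ hWmem hdecomp
    have hsplitsum : ∑ i, f (dR i) = (∑ j, f (w j)) + ((n - k : ℕ) : ℝ) * f 0 := by
      rw [← Finset.sum_add_sum_compl (Finset.univ.map (Fin.castLEEmb hkn))
        (fun i => f (dR i))]
      congr 1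
      · rw [Finset.sum_map]
        exact Finset.sum_congr rfl fun j _ => by rw [show ((Fin.castLEEmb hkn) j)
          = Fin.castLE hkn j from rfl, hdRcast j]
      · have hcongr : ∀ i ∈ (Finset.univ.map (Fin.castLEEmb hkn))ᶜ, f (dR i) = f 0 := by
          intro i hi
          have hik : ¬ ((i : ℕ) < k) := by
            intro hik
            have : i ∈ Finset.univ.map (Fin.castLEEmb hkn) :=
              Finset.mem_map.mpr ⟨⟨i, hik⟩, Finset.mem_univ _, by apply Fin.ext; rfl⟩
            exact (Finset.mem_compl.mp hi) this
          rw [hdR]; simp only [dif_neg hik]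
        rw [Finset.sum_congr rfl hcongr, Finset.sum_const, Finset.card_compl,
          Finset.card_map, Finset.card_univ, Fintype.card_fin, Fintype.card_fin,
          nsmul_eq_mul]
    have hSP : ∀ j, (matFun f (P j)).trace.re = f 1 + ((n - 1 : ℕ) : ℝ) * f 0 := by
      intro j
      rw [trace_matFun f _ (hP j).1]
      exact hsum j f
    -- linear term
    have hlin2 : (matFun (deriv f) D * (∑ j, ((w j : ℂ)) • P j)).trace.re
        = ∑ j, w j * (matFun (deriv f) D * P j).trace.re := by
      rw [Finset.mul_sum, trace_sum, Complex.re_sum]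
      refine Finset.sum_congr rfl fun j _ => ?_
      rw [mul_smul_comm, trace_smul]
      simp [smul_eq_mul, Complex.re_ofReal_mul]
    -- expand all bregman terms
    have hRHSsum : ∑ j, w j * bregman f (P j) D
        = (f 1 + ((n - 1 : ℕ) : ℝ) * f 0) - (matFun f D).trace.re
          - (∑ j, w j * (matFun (deriv f) D * P j).trace.re
              - (matFun (deriv f) D * D).trace.re) := by
      have hterm : ∀ j, w j * bregman f (P j) D
          = w j * ((f 1 + ((n - 1 : ℕ) : ℝ) * f 0) - (matFun f D).trace.re
              + (matFun (deriv f) D * D).trace.re)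
            - w j * (matFun (deriv f) D * P j).trace.re := by
        intro j
        rw [bregman_expand, hSP j]
        ring
      rw [Finset.sum_congr rfl fun j _ => hterm j, Finset.sum_sub_distrib,
        ← Finset.sum_mul, hsw, one_mul]
      ring
    rw [hRHSsum, bregman_expand, hSρ, hsplitsum, hlin2]
    -- strict Jensen for the weights
    have hklt : ∀ j, w j < 1 := by
      intro j
      obtain ⟨j', hj'⟩ := Fintype.exists_ne_of_one_lt_card
        (by rw [Fintype.card_fin]; omega) j
      have h1 : w j + ∑ i ∈ Finset.univ.erase j, w i = 1 := by
        rw [Finset.add_sum_erase _ _ (Finset.mem_univ j)]; exact hsw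
      have h2 : w j' ≤ ∑ i ∈ Finset.univ.erase j, w i :=
        Finset.single_le_sum (fun i _ => (hw i).le)
          (Finset.mem_erase.mpr ⟨hj', Finset.mem_univ j'⟩)
      linarith [hw j']
    have hpt : ∀ j, f (w j) < w j * f 1 + (1 - w j) * f 0 := by
      intro j
      have := hconv.2 (Set.mem_Ici.mpr (zero_le_one : (0:ℝ) ≤ 1))
        (Set.mem_Ici.mpr (le_rfl : (0:ℝ) ≤ 0)) one_ne_zero
        (hw j) (sub_pos.mpr (hklt j)) (by ring)
      simpa [smul_eq_mul] using this
    have : Nonempty (Fin k) := ⟨⟨0, by omega⟩⟩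
    have hne' : (Finset.univ : Finset (Fin k)).Nonempty := Finset.univ_nonempty
    have hstr : ∑ j, f (w j) < ∑ j, (w j * f 1 + (1 - w j) * f 0) :=
      Finset.sum_lt_sum_of_nonempty hne' (fun j _ => hpt j)
    have hrhs2 : ∑ j, (w j * f 1 + (1 - w j) * f 0) = f 1 + ((k : ℝ) - 1) * f 0 := by
      have h1 : ∑ j, (w j * f 1 + (1 - w j) * f 0)
          = (∑ j, w j) * f 1 + ((k : ℝ) - ∑ j, w j) * f 0 := by
        rw [Finset.sum_add_distrib, ← Finset.sum_mul, ← Finset.sum_mul,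
          Finset.sum_sub_distrib, Finset.sum_const, Finset.card_univ, Fintype.card_fin,
          nsmul_eq_mul, mul_one]
      rw [h1, hsw]
      ring
    have hcast1 : ((n - k : ℕ) : ℝ) = (n : ℝ) - (k : ℝ) := by
      rw [Nat.cast_sub hkn]
    have hcast2 : ((n - 1 : ℕ) : ℝ) = (n : ℝ) - 1 := by
      rw [Nat.cast_sub (by omega : 1 ≤ n)]; norm_num
    rw [hcast1, hcast2]
    linarith [hstr, hrhs2]
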